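/- Let f : ℝ → ℝ be five times continuously differentiable, x₀ ∈ ℝ, and fix reals a, b, r. For H > 0 define the mixed boundary functional M_H(f) = a·f(x₀+rH) + (b)·f′(x₀+rH) and its interpolated approximation Ṁ_H = a·[1 + rμδ + (r²/2)δ² + (r(r²−1)/6)μδ³ + (r²(r²−1)/24)δ⁴]U + (b/H)·[μδ + rδ² − (1/6 − r²/2)μδ³ − r(1/12 − r²/6)δ⁴]U, where U_k = f(x₀+kH) and the central difference operators act on U_{−2},…,U_2. Then Ṁ_H − M_H(f) = O(H⁴) as H → 0. -/

import Mathlib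

open Real Asymptotics Filter

private lemma abs_le_abs_of_uIcc {t h : ℝ} (ht : t ∈ Set.uIcc 0 h) : |t| ≤ |h| := by
  rcases le_total 0 h with hh | hh
  · rw [Set.uIcc_of_le hh] at ht
    rw [abs_of_nonneg ht.1, abs_of_nonneg hh]
    exact ht.2
  · rw [Set.uIcc_of_ge hh] at ht
    rw [abs_of_nonpos ht.2, abs_of_nonpos hh]
    linarith [ht.1]

lemma taylor_remainder_isBigO :
    ∀ (n : ℕ) (f : ℝ → ℝ), ContDiff ℝ (n + 1 : ℕ) f → ∀ x : ℝ,
      (fun h : ℝ => f (x + h) - ∑ k ∈ Finset.range (n + 1),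
          iteratedDeriv k f x / (k.factorial : ℝ) * h ^ k)
        =O[nhds 0] fun h : ℝ => h ^ (n + 1) := by
  intro n
  induction n with
  | zero =>
    intro f hf x
    have hd : DifferentiableAt ℝ f x := (hf.differentiable (by norm_num)).differentiableAt
    have h2 : Filter.Tendsto (fun h : ℝ => x + h) (nhds 0) (nhds x) := by
      have := Filter.Tendsto.const_add x (tendsto_id (x := nhds (0 : ℝ)))
      simpa using this
    have h3 := hd.isBigO_sub.comp_tendsto h2
    simp only [Function.comp_def] at h3
    refine h3.congr (fun h => ?_) (fun h => ?_)
    · simp [Finset.sum_range_one]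
    · simp
  | succ n ih =>
    intro f hf x
    have hfc : ContDiff ℝ (((n + 1 : ℕ) : WithTop ℕ∞) + 1) f := by exact_mod_cast hf
    have hfd : Differentiable ℝ f := (contDiff_succ_iff_deriv.mp hfc).1
    have hg : ContDiff ℝ ((n + 1 : ℕ) : WithTop ℕ∞) (deriv f) :=
      (contDiff_succ_iff_deriv.mp hfc).2.2
    set R : ℝ → ℝ := fun h => f (x + h) - ∑ k ∈ Finset.range (n + 1 + 1),
        iteratedDeriv k f x / (k.factorial : ℝ) * h ^ k with hRdef
    set Rg : ℝ → ℝ := fun h => deriv f (x + h) - ∑ k ∈ Finset.range (n + 1),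
        iteratedDeriv k (deriv f) x / (k.factorial : ℝ) * h ^ k with hRgdef
    have hRgO : Rg =O[nhds 0] fun h : ℝ => h ^ (n + 1) := ih (deriv f) hg x
    have hderiv : ∀ h : ℝ, HasDerivAt R (Rg h) h := by
      intro h
      have h1 : HasDerivAt (fun h : ℝ => f (x + h)) (deriv f (x + h)) h := by
        have := ((hfd (x + h)).hasDerivAt).comp h ((hasDerivAt_id h).const_add x)
        simpa [Function.comp_def] using this
      have h2 : HasDerivAt
          (fun h : ℝ => ∑ k ∈ Finset.range (n + 1 + 1),
            iteratedDeriv k f x / (k.factorial : ℝ) * h ^ k)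
          (∑ k ∈ Finset.range (n + 1 + 1),
            iteratedDeriv k f x / (k.factorial : ℝ) * ((k : ℝ) * h ^ (k - 1))) h := by
        apply HasDerivAt.fun_sum
        intro k _
        exact (hasDerivAt_pow k h).const_mul _
      have h3 : ∑ k ∈ Finset.range (n + 1 + 1),
            iteratedDeriv k f x / (k.factorial : ℝ) * ((k : ℝ) * h ^ (k - 1))
          = ∑ k ∈ Finset.range (n + 1),
            iteratedDeriv k (deriv f) x / (k.factorial : ℝ) * h ^ k := by
        rw [Finset.sum_range_succ']
        simp only [Nat.cast_zero, zero_mul, mul_zero, add_zero, Nat.add_sub_cancel,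
          Nat.cast_add, Nat.cast_one]
        refine Finset.sum_congr rfl fun i _ => ?_
        rw [← iteratedDeriv_succ']
        have hfac : ((i + 1).factorial : ℝ) = ((i : ℝ) + 1) * (i.factorial : ℝ) := by
          push_cast [Nat.factorial_succ]; ring
        rw [hfac]
        have h1 : ((i : ℝ) + 1) ≠ 0 := by positivity
        have h2 : (i.factorial : ℝ) ≠ 0 := by positivity
        field_simp
      have := h1.sub h2
      rw [h3] at this
      exact this
    have hR0 : R 0 = 0 := by
      simp [hRdef, Finset.sum_range_succ', pow_succ]
    obtain ⟨C, hC0, hCb⟩ := hRgO.exists_pos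
    have hCb' := hCb.bound
    rw [Metric.eventually_nhds_iff] at hCb'
    obtain ⟨δ, hδ, hb⟩ := hCb'
    rw [Asymptotics.isBigO_iff]
    refine ⟨C, ?_⟩
    rw [Metric.eventually_nhds_iff]
    refine ⟨δ, hδ, fun h hh => ?_⟩
    have hhδ : |h| < δ := by rwa [Real.dist_eq, sub_zero] at hh
    have key : ∀ t ∈ Set.uIcc (0 : ℝ) h, ‖Rg t‖ ≤ C * |h| ^ (n + 1) := by
      intro t ht
      have h1 : |t| ≤ |h| := abs_le_abs_of_uIcc ht
      have h2 : dist t 0 < δ := by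
        rw [Real.dist_eq, sub_zero]; exact lt_of_le_of_lt h1 hhδ
      calc ‖Rg t‖ ≤ C * ‖t ^ (n + 1)‖ := hb h2
        _ = C * |t| ^ (n + 1) := by rw [Real.norm_eq_abs, abs_pow]
        _ ≤ C * |h| ^ (n + 1) := by
            have := pow_le_pow_left₀ (abs_nonneg t) h1 (n + 1)
            nlinarith [this]
    have hmvt := (convex_uIcc (0 : ℝ) h).norm_image_sub_le_of_norm_hasDerivWithin_le
      (fun t _ => (hderiv t).hasDerivWithinAt) key (Set.left_mem_uIcc) (Set.right_mem_uIcc)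
    calc ‖R h‖ = ‖R h - R 0‖ := by rw [hR0, sub_zero]
      _ ≤ C * |h| ^ (n + 1) * ‖h - 0‖ := hmvt
      _ = C * ‖h ^ (n + 1 + 1)‖ := by
          rw [sub_zero, Real.norm_eq_abs, Real.norm_eq_abs, abs_pow, pow_succ]
          ring

set_option maxHeartbeats 2000000 in
theorem mixed_tbc_fourth_order_consistency
    (f : ℝ → ℝ) (hf : ContDiff ℝ 5 f) (x₀ a b r : ℝ) :
    (fun H : ℝ =>
        (a * (f x₀
              + r * ((f (x₀ + H) - f (x₀ - H)) / 2)
              + r ^ 2 / 2 * (f (x₀ + H) - 2 * f x₀ + f (x₀ - H))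
              + r * (r ^ 2 - 1) / 6 *
                  ((f (x₀ + 2 * H) - 2 * f (x₀ + H) + 2 * f (x₀ - H) - f (x₀ - 2 * H)) / 2)
              + r ^ 2 * (r ^ 2 - 1) / 24 *
                  (f (x₀ + 2 * H) - 4 * f (x₀ + H) + 6 * f x₀ - 4 * f (x₀ - H)
                    + f (x₀ - 2 * H)))
          + (b / H) * (((f (x₀ + H) - f (x₀ - H)) / 2)
              + r * (f (x₀ + H) - 2 * f x₀ + f (x₀ - H))
              - (1 / 6 - r ^ 2 / 2) *
                  ((f (x₀ + 2 * H) - 2 * f (x₀ + H) + 2 * f (x₀ - H) - f (x₀ - 2 * H)) / 2)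
              - r * (1 / 12 - r ^ 2 / 6) *
                  (f (x₀ + 2 * H) - 4 * f (x₀ + H) + 6 * f x₀ - 4 * f (x₀ - H)
                    + f (x₀ - 2 * H))))
          - (a * f (x₀ + r * H) + b * deriv f (x₀ + r * H)))
      =O[nhdsWithin 0 (Set.Ioi 0)] fun H : ℝ => H ^ 4 := by
  have hf5 : ContDiff ℝ (4 + 1 : ℕ) f := by exact hf
  have hfc : ContDiff ℝ (((3 + 1 : ℕ) : WithTop ℕ∞) + 1) f := by norm_cast
  have hgc : ContDiff ℝ (3 + 1 : ℕ) (deriv f) := (contDiff_succ_iff_deriv.mp hfc).2.2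
  -- explicit forms of the Taylor sums
  have hsum4 : ∀ t : ℝ, (∑ k ∈ Finset.range (4 + 1),
        iteratedDeriv k f x₀ / (k.factorial : ℝ) * t ^ k)
      = f x₀ + iteratedDeriv 1 f x₀ * t + iteratedDeriv 2 f x₀ / 2 * t ^ 2
        + iteratedDeriv 3 f x₀ / 6 * t ^ 3 + iteratedDeriv 4 f x₀ / 24 * t ^ 4 := by
    intro t
    rw [Finset.sum_range_succ, Finset.sum_range_succ, Finset.sum_range_succ,
      Finset.sum_range_succ, Finset.sum_range_one]
    norm_num [Nat.factorial]
    try ring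
  have hsum3 : ∀ t : ℝ, (∑ k ∈ Finset.range (3 + 1),
        iteratedDeriv k (deriv f) x₀ / (k.factorial : ℝ) * t ^ k)
      = iteratedDeriv 1 f x₀ + iteratedDeriv 2 f x₀ * t + iteratedDeriv 3 f x₀ / 2 * t ^ 2
        + iteratedDeriv 4 f x₀ / 6 * t ^ 3 := by
    intro t
    rw [Finset.sum_range_succ, Finset.sum_range_succ, Finset.sum_range_succ,
      Finset.sum_range_one]
    have ek : ∀ k : ℕ, iteratedDeriv k (deriv f) x₀ = iteratedDeriv (k + 1) f x₀ := fun k =>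
      congrFun (iteratedDeriv_succ' (n := k) (f := f)).symm x₀
    rw [ek 0, ek 1, ek 2, ek 3]
    norm_num [Nat.factorial]
    try ring
  have hT := taylor_remainder_isBigO 4 f hf5 x₀
  have hTg := taylor_remainder_isBigO 3 (deriv f) hgc x₀
  -- scaled remainder estimates
  have hscale : ∀ s : ℝ, (fun H : ℝ => f (x₀ + s * H)
      - (f x₀ + iteratedDeriv 1 f x₀ * (s * H) + iteratedDeriv 2 f x₀ / 2 * (s * H) ^ 2
        + iteratedDeriv 3 f x₀ / 6 * (s * H) ^ 3 + iteratedDeriv 4 f x₀ / 24 * (s * H) ^ 4))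
      =O[nhds 0] fun H : ℝ => H ^ 5 := by
    intro s
    have hts : Filter.Tendsto (fun H : ℝ => s * H) (nhds 0) (nhds 0) := by
      have := Filter.Tendsto.const_mul s (tendsto_id (x := nhds (0 : ℝ)))
      simpa using this
    have h1 := hT.comp_tendsto hts
    simp only [Function.comp_def] at h1
    have h2 : (fun H : ℝ => (s * H) ^ (4 + 1)) =O[nhds 0] fun H : ℝ => H ^ 5 := by
      have := (isBigO_refl (fun H : ℝ => H ^ 5) (nhds 0)).const_mul_left (s ^ 5)
      refine this.congr (fun H => by ring) (fun H => rfl)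
    exact (h1.trans h2).congr_left fun H => by rw [hsum4]
  have hES : (fun H : ℝ => deriv f (x₀ + r * H)
      - (iteratedDeriv 1 f x₀ + iteratedDeriv 2 f x₀ * (r * H) + iteratedDeriv 3 f x₀ / 2 * (r * H) ^ 2
        + iteratedDeriv 4 f x₀ / 6 * (r * H) ^ 3))
      =O[nhds 0] fun H : ℝ => H ^ 4 := by
    have hts : Filter.Tendsto (fun H : ℝ => r * H) (nhds 0) (nhds 0) := by
      have := Filter.Tendsto.const_mul r (tendsto_id (x := nhds (0 : ℝ)))
      simpa using this
    have h1 := hTg.comp_tendsto hts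
    simp only [Function.comp_def] at h1
    have h2 : (fun H : ℝ => (r * H) ^ (3 + 1)) =O[nhds 0] fun H : ℝ => H ^ 4 := by
      have := (isBigO_refl (fun H : ℝ => H ^ 4) (nhds 0)).const_mul_left (r ^ 4)
      refine this.congr (fun H => by ring) (fun H => rfl)
    exact (h1.trans h2).congr_left fun H => by rw [hsum3]
  -- H^5 = O(H^4) near 0
  have h54 : (fun H : ℝ => H ^ 5) =O[nhds 0] fun H : ℝ => H ^ 4 := by
    have h1 : (fun H : ℝ => H) =O[nhds 0] (fun _ : ℝ => (1 : ℝ)) :=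
      (Filter.tendsto_id (x := nhds (0 : ℝ))).isBigO_one ℝ
    have := h1.mul (isBigO_refl (fun H : ℝ => H ^ 4) (nhds 0))
    exact this.congr (fun H => by ring) (fun H => by ring)
  have hle : nhdsWithin (0 : ℝ) (Set.Ioi 0) ≤ nhds 0 := nhdsWithin_le_nhds
  set L := nhdsWithin (0 : ℝ) (Set.Ioi 0) with hLdef
  -- elementary pieces, O(H^4) on L
  have e1 := ((hscale 1).mono hle).trans (h54.mono hle)
  have em1 := ((hscale (-1)).mono hle).trans (h54.mono hle)
  have e2 := ((hscale 2).mono hle).trans (h54.mono hle)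
  have em2 := ((hscale (-2)).mono hle).trans (h54.mono hle)
  have er := ((hscale r).mono hle).trans (h54.mono hle)
  have es := hES.mono hle
  -- the b/H piece
  have hDCraw :=
    (((((hscale 1).sub (hscale (-1))).const_mul_left (1 / 2)).add
      (((hscale 1).add (hscale (-1))).const_mul_left r)).sub
      (((((hscale 2).sub ((hscale 1).const_mul_left 2)).add
        ((hscale (-1)).const_mul_left 2)).sub (hscale (-2))).const_mul_left
          ((1 / 6 - r ^ 2 / 2) / 2))).sub
      (((((hscale 2).sub ((hscale 1).const_mul_left 4)).sub
        ((hscale (-1)).const_mul_left 4)).add (hscale (-2))).const_mul_left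
          (r * (1 / 12 - r ^ 2 / 6)))
  have hdiv : (fun H : ℝ => b / H * H ^ 5) =O[L] fun H : ℝ => H ^ 4 := by
    rw [Asymptotics.isBigO_iff]
    refine ⟨|b|, ?_⟩
    filter_upwards [self_mem_nhdsWithin] with H hH
    have hH0 : (H : ℝ) ≠ 0 := ne_of_gt hH
    have hb : b / H * H ^ 5 = b * H ^ 4 := by field_simp
    rw [hb, Real.norm_eq_abs, Real.norm_eq_abs, abs_mul]
  have dcb := ((isBigO_refl (fun H : ℝ => b / H) L).mul (hDCraw.mono hle)).trans hdiv
  -- the a-bracket piece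
  have hAC :=
    ((((e1.sub em1).const_mul_left (r / 2)).add
      ((e1.add em1).const_mul_left (r ^ 2 / 2))).add
      (((((e2.sub (e1.const_mul_left 2)).add (em1.const_mul_left 2)).sub em2)).const_mul_left
        (r * (r ^ 2 - 1) / 12))).add
      ((((e2.sub (e1.const_mul_left 4)).sub (em1.const_mul_left 4)).add em2).const_mul_left
        (r ^ 2 * (r ^ 2 - 1) / 24))
  have RAW := (((hAC.const_mul_left a).add dcb).sub (er.const_mul_left a)).sub
    (es.const_mul_left b)
  refine Filter.EventuallyEq.trans_isBigO ?_ RAW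
  filter_upwards [self_mem_nhdsWithin] with H hH
  have hH0 : (H : ℝ) ≠ 0 := ne_of_gt hH
  rw [show x₀ - H = x₀ + (-1 : ℝ) * H by ring,
    show x₀ - 2 * H = x₀ + (-2 : ℝ) * H by ring,
    show x₀ + H = x₀ + (1 : ℝ) * H by ring]
  field_simp
  ring
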